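/- Let R > 0, let μ_M be a Borel probability measure on [0,R], and let α₀ > 0. Then there exists a Borel probability measure μ on [0,R] such that ∫ t^k dμ(t) = α₀² ∫ t^{k−1} dμ_M(t) for every integer k ≥ 1 if and only if the function t ↦ 1/t is μ_M-integrable and α₀² ∫ (1/t) dμ_M(t) ≤ 1. Moreover, in that case μ is uniquely determined, namely μ(E) = α₀² ∫_E (1/t) dμ_M(t) + (1 − α₀² ∫ (1/t) dμ_M) δ₀(E) for all Borel E ⊆ [0,R], where δ₀ is the Dirac measure at 0; in particular, no such μ exists when μ_M({0}) > 0. -/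

import Mathlib

open MeasureTheory
open scoped ENNReal NNReal

lemma aux_integrable {ξ : Measure ℝ} [IsFiniteMeasure ξ] {R : ℝ}
    (h : ξ (Set.Icc (0:ℝ) R)ᶜ = 0) {f : ℝ → ℝ} (hf : Continuous f) :
    Integrable f ξ := by
  have hrs : ξ.restrict (Set.Icc (0:ℝ) R) = ξ :=
    Measure.restrict_eq_self_of_ae_mem (mem_ae_iff.mpr h)
  rw [← hrs]
  exact hf.continuousOn.integrableOn_compact isCompact_Icc

lemma aux_poly_int {R : ℝ} (ν : Measure ℝ) [IsFiniteMeasure ν]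
    (h : ν (Set.Icc (0:ℝ) R)ᶜ = 0) (p : Polynomial ℝ) :
    ∫ t, p.eval t ∂ν = ∑ n ∈ Finset.range (p.natDegree + 1), p.coeff n * ∫ t, t ^ n ∂ν := by
  have h1 : ∀ t : ℝ, p.eval t = ∑ n ∈ Finset.range (p.natDegree + 1), p.coeff n * t ^ n :=
    fun t => p.eval_eq_sum_range t
  rw [integral_congr_ae (Filter.Eventually.of_forall h1), integral_finset_sum]
  · exact Finset.sum_congr rfl fun n _ => integral_const_mul _ _
  · intro n _
    exact (aux_integrable h (continuous_pow n)).const_mul _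

lemma aux_mom_ext (R : ℝ) (ν₁ ν₂ : Measure ℝ) [IsFiniteMeasure ν₁] [IsFiniteMeasure ν₂]
    (h₁ : ν₁ (Set.Icc (0:ℝ) R)ᶜ = 0) (h₂ : ν₂ (Set.Icc (0:ℝ) R)ᶜ = 0)
    (hmom : ∀ n : ℕ, ∫ t, t ^ n ∂ν₁ = ∫ t, t ^ n ∂ν₂) : ν₁ = ν₂ := by
  have hpoly : ∀ p : Polynomial ℝ, ∫ t, p.eval t ∂ν₁ = ∫ t, p.eval t ∂ν₂ := by
    intro p
    rw [aux_poly_int ν₁ h₁, aux_poly_int ν₂ h₂]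
    exact Finset.sum_congr rfl fun n _ => by rw [hmom n]
  have hcont : ∀ f : ℝ → ℝ, Continuous f → ∫ t, f t ∂ν₁ = ∫ t, f t ∂ν₂ := by
    intro f hf
    have key : ∀ ε : ℝ, 0 < ε →
        |∫ t, f t ∂ν₁ - ∫ t, f t ∂ν₂| ≤ ε * ((ν₁ Set.univ).toReal + (ν₂ Set.univ).toReal) := by
      intro ε hε
      obtain ⟨p, hp⟩ := exists_polynomial_near_of_continuousOn 0 R f hf.continuousOn ε hε
      have hb : ∀ (ν : Measure ℝ) (_ : IsFiniteMeasure ν) (_ : ν (Set.Icc (0:ℝ) R)ᶜ = 0),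
          |∫ t, f t ∂ν - ∫ t, p.eval t ∂ν| ≤ ε * (ν Set.univ).toReal := by
        intro ν hν h
        rw [← Real.norm_eq_abs, ← integral_sub (aux_integrable h hf) (aux_integrable h p.continuous)]
        have hae : ∀ᵐ t ∂ν, ‖f t - p.eval t‖ ≤ ε := by
          filter_upwards [mem_ae_iff.mpr h] with t ht
          rw [Real.norm_eq_abs, abs_sub_comm]
          exact (hp t ht).le
        exact norm_integral_le_of_norm_le_const hae
      have b1 := hb ν₁ inferInstance h₁
      have b2 := hb ν₂ inferInstance h₂
      have := hpoly p
      calc |∫ t, f t ∂ν₁ - ∫ t, f t ∂ν₂|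
          = |(∫ t, f t ∂ν₁ - ∫ t, p.eval t ∂ν₁) - (∫ t, f t ∂ν₂ - ∫ t, p.eval t ∂ν₂)| := by
            rw [this]; congr 1; ring
        _ ≤ |∫ t, f t ∂ν₁ - ∫ t, p.eval t ∂ν₁| + |∫ t, f t ∂ν₂ - ∫ t, p.eval t ∂ν₂| :=
            abs_sub _ _
        _ ≤ ε * (ν₁ Set.univ).toReal + ε * (ν₂ Set.univ).toReal := add_le_add b1 b2
        _ = ε * ((ν₁ Set.univ).toReal + (ν₂ Set.univ).toReal) := by ring
    have h0 : |∫ t, f t ∂ν₁ - ∫ t, f t ∂ν₂| ≤ 0 := by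
      by_contra hcon
      push_neg at hcon
      set C := (ν₁ Set.univ).toReal + (ν₂ Set.univ).toReal with hC
      have hC0 : 0 ≤ C := by positivity
      set A := |∫ t, f t ∂ν₁ - ∫ t, f t ∂ν₂|
      have hCpos : 0 < C + 1 := by linarith
      have hk := key (A / (2 * (C + 1))) (by positivity)
      rw [div_mul_eq_mul_div, le_div_iff₀ (by positivity)] at hk
      nlinarith
    have := abs_nonneg (∫ t, f t ∂ν₁ - ∫ t, f t ∂ν₂)
    have : |∫ t, f t ∂ν₁ - ∫ t, f t ∂ν₂| = 0 := le_antisymm h0 this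
    linarith [abs_eq_zero.mp this, sub_eq_zero.mp (abs_eq_zero.mp this)]
  apply ext_of_forall_lintegral_eq_of_IsFiniteMeasure
  intro g
  have hgc : Continuous fun t : ℝ => (g t : ℝ) := NNReal.continuous_coe.comp g.continuous
  rw [lintegral_coe_eq_integral _ (aux_integrable h₁ hgc),
      lintegral_coe_eq_integral _ (aux_integrable h₂ hgc),
      hcont _ hgc]

/-- Subnormal backward extension of a 1-variable weighted shift (measure form).
The integral of `1/t` is expressed as the lower integral of `(ENNReal.ofReal t)⁻¹`,
which is `∞` at `t = 0`, so finiteness of this lower integral is exactly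
`1/t ∈ L¹(μ_M)` in the classical sense. -/
theorem stmt0 (R : ℝ) (hR : 0 < R) (μM : Measure ℝ) (hprobM : IsProbabilityMeasure μM)
    (hsuppM : μM (Set.Icc (0 : ℝ) R)ᶜ = 0) (α₀ : ℝ) (hα₀ : 0 < α₀) :
    ((∃ μ : Measure ℝ, IsProbabilityMeasure μ ∧ μ (Set.Icc (0 : ℝ) R)ᶜ = 0 ∧
        ∀ k : ℕ, 1 ≤ k → ∫ t, t ^ k ∂μ = α₀ ^ 2 * ∫ t, t ^ (k - 1) ∂μM) ↔
      ((∫⁻ t, (ENNReal.ofReal t)⁻¹ ∂μM) < ⊤ ∧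
        ENNReal.ofReal (α₀ ^ 2) * ∫⁻ t, (ENNReal.ofReal t)⁻¹ ∂μM ≤ 1)) ∧
    (∀ μ : Measure ℝ, IsProbabilityMeasure μ → μ (Set.Icc (0 : ℝ) R)ᶜ = 0 →
      (∀ k : ℕ, 1 ≤ k → ∫ t, t ^ k ∂μ = α₀ ^ 2 * ∫ t, t ^ (k - 1) ∂μM) →
      ∀ E : Set ℝ, MeasurableSet E →
        μ E = ENNReal.ofReal (α₀ ^ 2) * (∫⁻ t in E, (ENNReal.ofReal t)⁻¹ ∂μM) +
          (1 - ENNReal.ofReal (α₀ ^ 2) * ∫⁻ t, (ENNReal.ofReal t)⁻¹ ∂μM) *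
            Measure.dirac (0 : ℝ) E) ∧
    (0 < μM {0} →
      ¬ ∃ μ : Measure ℝ, IsProbabilityMeasure μ ∧ μ (Set.Icc (0 : ℝ) R)ᶜ = 0 ∧
        ∀ k : ℕ, 1 ≤ k → ∫ t, t ^ k ∂μ = α₀ ^ 2 * ∫ t, t ^ (k - 1) ∂μM) := by
  set c₀ : ℝ≥0∞ := ENNReal.ofReal (α₀ ^ 2) with hc₀def
  set I : ℝ≥0∞ := ∫⁻ t, (ENNReal.ofReal t)⁻¹ ∂μM with hIdef
  have hc₀0 : c₀ ≠ 0 := by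
    simp [hc₀def, ENNReal.ofReal_eq_zero, not_le]
    positivity
  have hc₀top : c₀ ≠ ⊤ := ENNReal.ofReal_ne_top
  have mof : Measurable fun t : ℝ => ENNReal.ofReal t := ENNReal.measurable_ofReal
  have minv : Measurable fun t : ℝ => (ENNReal.ofReal t)⁻¹ := mof.inv
  have hind : ∀ t : ℝ, ENNReal.ofReal t * (ENNReal.ofReal t)⁻¹
      = Set.indicator (Set.Ioi (0:ℝ)) (fun _ => (1:ℝ≥0∞)) t := by
    intro t
    by_cases ht : 0 < t
    · rw [Set.indicator_of_mem (Set.mem_Ioi.mpr ht)]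
      exact ENNReal.mul_inv_cancel (ENNReal.ofReal_pos.mpr ht).ne' ENNReal.ofReal_ne_top
    · rw [Set.indicator_of_notMem (by simpa using ht),
        ENNReal.ofReal_eq_zero.mpr (le_of_not_gt ht), zero_mul]
  -- KEY: the withDensity measure is determined
  have KEY : ∀ μ : Measure ℝ, IsProbabilityMeasure μ → μ (Set.Icc (0 : ℝ) R)ᶜ = 0 →
      (∀ k : ℕ, 1 ≤ k → ∫ t, t ^ k ∂μ = α₀ ^ 2 * ∫ t, t ^ (k - 1) ∂μM) →
      μ.withDensity (fun t => ENNReal.ofReal t) = c₀ • μM := by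
    intro μ hprob hsupp hmom
    set ν := μ.withDensity (fun t => ENNReal.ofReal t) with hνdef
    have hνIcc : ν (Set.Icc (0:ℝ) R)ᶜ = 0 := by
      rw [hνdef, withDensity_apply _ measurableSet_Icc.compl]
      exact setLIntegral_measure_zero _ _ hsupp
    have hνfin : IsFiniteMeasure ν := by
      constructor
      rw [hνdef, withDensity_apply _ MeasurableSet.univ, Measure.restrict_univ]
      calc ∫⁻ t, ENNReal.ofReal t ∂μ ≤ ∫⁻ _, ENNReal.ofReal R ∂μ := by
            apply lintegral_mono_ae
            filter_upwards [mem_ae_iff.mpr hsupp] with t ht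
            exact ENNReal.ofReal_le_ofReal ht.2
        _ = ENNReal.ofReal R * μ Set.univ := lintegral_const _
        _ < ⊤ := by simp [hprob.measure_univ]
    have hsmulfin : IsFiniteMeasure (c₀ • μM) := by
      constructor
      rw [Measure.smul_apply, smul_eq_mul, hprobM.measure_univ, mul_one]
      exact hc₀top.lt_top
    have hsmulIcc : (c₀ • μM) (Set.Icc (0:ℝ) R)ᶜ = 0 := by
      rw [Measure.smul_apply, smul_eq_mul, hsuppM, mul_zero]
    refine aux_mom_ext R ν (c₀ • μM) hνIcc hsmulIcc ?_
    intro n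
    have hL : ∫ t, t ^ n ∂ν = ∫ t, t ^ (n + 1) ∂μ := by
      rw [hνdef]
      have heq : (fun t : ℝ => ENNReal.ofReal t)
          = fun t : ℝ => ((Real.toNNReal t : ℝ≥0) : ℝ≥0∞) := rfl
      rw [heq, integral_withDensity_eq_integral_smul measurable_real_toNNReal]
      apply integral_congr_ae
      filter_upwards [mem_ae_iff.mpr hsupp] with t ht
      show (Real.toNNReal t) • t ^ n = t ^ (n + 1)
      rw [NNReal.smul_def, smul_eq_mul, Real.coe_toNNReal _ ht.1, ← pow_succ']
    rw [hL, hmom (n + 1) (by omega), integral_smul_measure,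
      ENNReal.toReal_ofReal (sq_nonneg α₀), Nat.add_sub_cancel, smul_eq_mul]
  -- the total mass identity
  have HI : ∀ μ : Measure ℝ, μ.withDensity (fun t => ENNReal.ofReal t) = c₀ • μM →
      c₀ * I = μ (Set.Ioi 0) := by
    intro μ hν
    calc c₀ * I = ∫⁻ t, (ENNReal.ofReal t)⁻¹ ∂(c₀ • μM) := by rw [lintegral_smul_measure, smul_eq_mul]
      _ = ∫⁻ t, (ENNReal.ofReal t)⁻¹ ∂(μ.withDensity (fun t => ENNReal.ofReal t)) := by
          rw [hν]
      _ = ∫⁻ t, ENNReal.ofReal t * (ENNReal.ofReal t)⁻¹ ∂μ :=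
          lintegral_withDensity_eq_lintegral_mul μ mof minv
      _ = ∫⁻ t, Set.indicator (Set.Ioi (0:ℝ)) (fun _ => (1:ℝ≥0∞)) t ∂μ := by
          simp_rw [hind]
      _ = μ (Set.Ioi 0) := by
          rw [lintegral_indicator measurableSet_Ioi, setLIntegral_one]
  -- part 1, forward direction
  have hmp : (∃ μ : Measure ℝ, IsProbabilityMeasure μ ∧ μ (Set.Icc (0 : ℝ) R)ᶜ = 0 ∧
        ∀ k : ℕ, 1 ≤ k → ∫ t, t ^ k ∂μ = α₀ ^ 2 * ∫ t, t ^ (k - 1) ∂μM) →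
      (I < ⊤ ∧ c₀ * I ≤ 1) := by
    rintro ⟨μ, hprob, hsupp, hmom⟩
    have hI := HI μ (KEY μ hprob hsupp hmom)
    have hle : c₀ * I ≤ 1 := by
      rw [hI]; exact prob_le_one
    refine ⟨?_, hle⟩
    by_contra htop
    rw [not_lt, top_le_iff] at htop
    rw [htop, ENNReal.mul_top hc₀0] at hle
    exact (by simp : ¬ (⊤ : ℝ≥0∞) ≤ 1) hle
  -- part 1, reverse direction (construction)
  have hmpr : (I < ⊤ ∧ c₀ * I ≤ 1) →
      (∃ μ : Measure ℝ, IsProbabilityMeasure μ ∧ μ (Set.Icc (0 : ℝ) R)ᶜ = 0 ∧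
        ∀ k : ℕ, 1 ≤ k → ∫ t, t ^ k ∂μ = α₀ ^ 2 * ∫ t, t ^ (k - 1) ∂μM) := by
    rintro ⟨hIfin, hle⟩
    have hM0 : μM {0} = 0 := by
      by_contra h0
      have hbound : (ENNReal.ofReal (0:ℝ))⁻¹ * μM {0} ≤ I := by
        rw [hIdef, ← lintegral_singleton (fun t => (ENNReal.ofReal t)⁻¹) 0]
        exact lintegral_mono' Measure.restrict_le_self le_rfl
      rw [ENNReal.ofReal_zero, ENNReal.inv_zero, ENNReal.top_mul h0] at hbound
      exact hIfin.ne (top_le_iff.mp hbound)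
    have haeM : ∀ᵐ t ∂μM, 0 < t ∧ t ≤ R := by
      have h1 : ∀ᵐ t ∂μM, t ∈ Set.Icc (0:ℝ) R := mem_ae_iff.mpr hsuppM
      have h2 : ∀ᵐ t ∂μM, t ≠ 0 := by
        rw [ae_iff]
        convert hM0 using 2
        ext t; simp
      filter_upwards [h1, h2] with t ht hne
      exact ⟨lt_of_le_of_ne ht.1 (Ne.symm hne), ht.2⟩
    set ρ := μM.withDensity (fun t => (ENNReal.ofReal t)⁻¹) with hρdef
    have hρuniv : ρ Set.univ = I := by
      rw [hρdef, withDensity_apply _ MeasurableSet.univ, Measure.restrict_univ]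
    have hρIcc : ρ (Set.Icc (0:ℝ) R)ᶜ = 0 := by
      rw [hρdef, withDensity_apply _ measurableSet_Icc.compl]
      exact setLIntegral_measure_zero _ _ hsuppM
    refine ⟨c₀ • ρ + (1 - c₀ * I) • Measure.dirac (0:ℝ), ?_, ?_, ?_⟩
    · constructor
      rw [Measure.add_apply, Measure.smul_apply, Measure.smul_apply, hρuniv,
        Measure.dirac_apply' _ MeasurableSet.univ]
      simp only [Set.indicator_of_mem (Set.mem_univ (0:ℝ)), Pi.one_apply, smul_eq_mul, mul_one]
      exact add_tsub_cancel_of_le hle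
    · rw [Measure.add_apply, Measure.smul_apply, Measure.smul_apply, hρIcc,
        Measure.dirac_apply' _ measurableSet_Icc.compl]
      rw [Set.indicator_of_notMem (by simp [hR.le] : (0:ℝ) ∉ (Set.Icc (0:ℝ) R)ᶜ)]
      simp
    · intro k hk
      obtain ⟨m, rfl⟩ : ∃ m, k = m + 1 := ⟨k - 1, (Nat.succ_pred_eq_of_pos hk).symm⟩
      have hρfin : IsFiniteMeasure (c₀ • ρ) := by
        constructor
        rw [Measure.smul_apply, hρuniv, smul_eq_mul]
        exact ENNReal.mul_lt_top hc₀top.lt_top hIfin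
      have hdfin : IsFiniteMeasure ((1 - c₀ * I) • Measure.dirac (0:ℝ)) := by
        constructor
        rw [Measure.smul_apply, Measure.dirac_apply' _ MeasurableSet.univ]
        simp only [Set.indicator_of_mem (Set.mem_univ (0:ℝ)), Pi.one_apply, smul_eq_mul, mul_one]
        exact (tsub_le_self.trans_lt (by simp : (1:ℝ≥0∞) < ⊤))
      have hρsIcc : (c₀ • ρ) (Set.Icc (0:ℝ) R)ᶜ = 0 := by
        rw [Measure.smul_apply, hρIcc, smul_eq_mul, mul_zero]
      have hdIcc : ((1 - c₀ * I) • Measure.dirac (0:ℝ)) (Set.Icc (0:ℝ) R)ᶜ = 0 := by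
        rw [Measure.smul_apply, Measure.dirac_apply' _ measurableSet_Icc.compl]
        rw [Set.indicator_of_notMem (by simp [hR.le] : (0:ℝ) ∉ (Set.Icc (0:ℝ) R)ᶜ)]
        simp
      rw [integral_add_measure (aux_integrable hρsIcc (continuous_pow _))
        (aux_integrable hdIcc (continuous_pow _))]
      have hd0 : ∫ t, t ^ (m+1) ∂((1 - c₀ * I) • Measure.dirac (0:ℝ)) = 0 := by
        rw [integral_smul_measure, integral_dirac]
        simp
      have hρm : ∫ t, t ^ (m+1) ∂(c₀ • ρ) = α₀ ^ 2 * ∫ t, t ^ m ∂μM := by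
        rw [integral_smul_measure, ENNReal.toReal_ofReal (sq_nonneg α₀), smul_eq_mul]
        congr 1
        have hcg : ρ = μM.withDensity (fun t => ((Real.toNNReal t⁻¹ : ℝ≥0) : ℝ≥0∞)) := by
          rw [hρdef]
          apply withDensity_congr_ae
          filter_upwards [haeM] with t ht
          rw [show ((Real.toNNReal t⁻¹ : ℝ≥0) : ℝ≥0∞) = ENNReal.ofReal t⁻¹ from rfl,
            ENNReal.ofReal_inv_of_pos ht.1]
        have minv2 : Measurable fun t : ℝ => Real.toNNReal t⁻¹ :=
          measurable_real_toNNReal.comp measurable_inv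
        rw [hcg, integral_withDensity_eq_integral_smul minv2]
        apply integral_congr_ae
        filter_upwards [haeM] with t ht
        show (Real.toNNReal t⁻¹) • t ^ (m+1) = t ^ m
        rw [NNReal.smul_def, smul_eq_mul, Real.coe_toNNReal _ (inv_nonneg.mpr ht.1.le), pow_succ]
        rw [mul_comm (t ^ m) t, ← mul_assoc, inv_mul_cancel₀ ht.1.ne', one_mul]
      rw [hd0, hρm, add_zero, Nat.add_sub_cancel]
  refine ⟨⟨hmp, hmpr⟩, ?_, ?_⟩
  · -- uniqueness
    intro μ hprob hsupp hmom E hE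
    have hν := KEY μ hprob hsupp hmom
    have hI := HI μ hν
    have hresE : c₀ * ∫⁻ t in E, (ENNReal.ofReal t)⁻¹ ∂μM = μ (Set.Ioi 0 ∩ E) := by
      calc c₀ * ∫⁻ t in E, (ENNReal.ofReal t)⁻¹ ∂μM
          = ∫⁻ t, (ENNReal.ofReal t)⁻¹ ∂((c₀ • μM).restrict E) := by
            rw [Measure.restrict_smul, lintegral_smul_measure, smul_eq_mul]
        _ = ∫⁻ t, (ENNReal.ofReal t)⁻¹
              ∂((μ.withDensity (fun t => ENNReal.ofReal t)).restrict E) := by rw [hν]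
        _ = ∫⁻ t, (ENNReal.ofReal t)⁻¹ ∂((μ.restrict E).withDensity
              (fun t => ENNReal.ofReal t)) := by rw [restrict_withDensity hE]
        _ = ∫⁻ t, ENNReal.ofReal t * (ENNReal.ofReal t)⁻¹ ∂(μ.restrict E) :=
            lintegral_withDensity_eq_lintegral_mul _ mof minv
        _ = ∫⁻ t, Set.indicator (Set.Ioi (0:ℝ)) (fun _ => (1:ℝ≥0∞)) t ∂(μ.restrict E) := by
            simp_rw [hind]
        _ = (μ.restrict E) (Set.Ioi 0) := by
            rw [lintegral_indicator measurableSet_Ioi, setLIntegral_one]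
        _ = μ (Set.Ioi 0 ∩ E) := Measure.restrict_apply measurableSet_Ioi
    have hneg : μ (Set.Iio (0:ℝ)) = 0 := by
      apply measure_mono_null _ hsupp
      intro t ht
      simp only [Set.mem_compl_iff, Set.mem_Icc, not_and, not_le]
      intro h; exact absurd h (not_le.mpr ht)
    have hsplit : μ (E ∩ Set.Ioi 0) + μ (E \ Set.Ioi 0) = μ E :=
      measure_inter_add_diff E measurableSet_Ioi
    rw [hresE, hI]
    by_cases h0E : (0:ℝ) ∈ E
    · have hd1 : Measure.dirac (0:ℝ) E = 1 := by
        rw [Measure.dirac_apply' _ hE, Set.indicator_of_mem h0E, Pi.one_apply]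
      have hzero1 : μ (E \ Set.Ioi 0) = μ {(0:ℝ)} := by
        apply le_antisymm
        · have hsub : E \ Set.Ioi 0 ⊆ {(0:ℝ)} ∪ Set.Iio 0 := by
            intro t ⟨htE, htn⟩
            simp only [Set.mem_Ioi, not_lt] at htn
            rcases lt_or_eq_of_le htn with h | h
            · exact Or.inr h
            · exact Or.inl h
          calc μ (E \ Set.Ioi 0) ≤ μ ({(0:ℝ)} ∪ Set.Iio 0) := measure_mono hsub
            _ ≤ μ {(0:ℝ)} + μ (Set.Iio 0) := measure_union_le _ _
            _ = μ {(0:ℝ)} := by rw [hneg, add_zero]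
        · exact measure_mono (fun t ht => by
            simp only [Set.mem_singleton_iff] at ht
            exact ⟨ht ▸ h0E, by simp [ht]⟩)
      have hzero2 : μ {(0:ℝ)} = 1 - μ (Set.Ioi 0) := by
        have hcompl : μ (Set.Ioi (0:ℝ))ᶜ = μ Set.univ - μ (Set.Ioi 0) :=
          measure_compl measurableSet_Ioi (measure_ne_top μ _)
        rw [hprob.measure_univ] at hcompl
        rw [← hcompl, Set.compl_Ioi]
        apply le_antisymm
        · exact measure_mono (fun t ht => by simp at ht ⊢; simp [ht])
        · have hsub : Set.Iic (0:ℝ) ⊆ {(0:ℝ)} ∪ Set.Iio 0 := by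
            intro t ht
            simp only [Set.mem_Iic] at ht
            rcases lt_or_eq_of_le ht with h | h
            · exact Or.inr h
            · exact Or.inl h
          calc μ (Set.Iic 0) ≤ μ ({(0:ℝ)} ∪ Set.Iio 0) := measure_mono hsub
            _ ≤ μ {(0:ℝ)} + μ (Set.Iio 0) := measure_union_le _ _
            _ = μ {(0:ℝ)} := by rw [hneg, add_zero]
      rw [hd1, mul_one, ← hsplit, Set.inter_comm, hzero1, hzero2]
    · have hd0 : Measure.dirac (0:ℝ) E = 0 := by
        rw [Measure.dirac_apply' _ hE, Set.indicator_of_notMem h0E]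
      have hzero : μ (E \ Set.Ioi 0) = 0 := by
        apply measure_mono_null _ hneg
        intro t ⟨htE, htn⟩
        simp only [Set.mem_Ioi, not_lt] at htn
        rcases lt_or_eq_of_le htn with h | h
        · exact h
        · exact absurd (h ▸ htE) h0E
      rw [hd0, mul_zero, add_zero, ← hsplit, hzero, add_zero, Set.inter_comm]
  · -- part 3
    intro h0 hex
    have hIfin := (hmp hex).1
    have hbound : (ENNReal.ofReal (0:ℝ))⁻¹ * μM {0} ≤ I := by
      rw [hIdef, ← lintegral_singleton (fun t => (ENNReal.ofReal t)⁻¹) 0]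
      exact lintegral_mono' Measure.restrict_le_self le_rfl
    rw [ENNReal.ofReal_zero, ENNReal.inv_zero, ENNReal.top_mul h0.ne'] at hbound
    exact hIfin.ne (top_le_iff.mp hbound)
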